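/- For every d ≥ 1, every κ > 0, every point z ∈ ℝ^{d+1}, and every integer p ≥ 1, the polynomial quasi-Trefftz space QT^p(z) is a linear subspace of the space of real polynomials in d+1 variables, and its dimension (as a real vector space) equals binom(p + d, d) + binom(p − 1 + d, d). -/

import Mathlib

set_option maxHeartbeats 1000000
set_option synthInstance.maxHeartbeats 400000


/-- Iterated partial derivative of a multivariate polynomial: the `α`-th
partial derivative, for a multi-index `α`. -/
noncomputable def mpderiv {n : ℕ} (α : Fin n → ℕ) :
    MvPolynomial (Fin n) ℝ →ₗ[ℝ] MvPolynomial (Fin n) ℝ :=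
  ((List.finRange n).map
    (fun i => ((MvPolynomial.pderiv i :
        Derivation ℝ (MvPolynomial (Fin n) ℝ) (MvPolynomial (Fin n) ℝ)).toLinearMap) ^ (α i))).prod

/-- The heat operator `H v = ∂_t v − κ Σ_{j=1}^d ∂²_{x_j} v` acting on real
polynomials in the `d+1` variables `x_1, …, x_d, t` (indexed by `Fin (d+1)`,
the time variable being the last index). -/
noncomputable def heatOp (d : ℕ) (κ : ℝ) (v : MvPolynomial (Fin (d + 1)) ℝ) :
    MvPolynomial (Fin (d + 1)) ℝ :=
  MvPolynomial.pderiv (Fin.last d) v -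
    MvPolynomial.C κ * ∑ j : Fin d,
      MvPolynomial.pderiv j.castSucc (MvPolynomial.pderiv j.castSucc v)

/-- The polynomial quasi-Trefftz space `QT^p(z)`: polynomials of total degree
at most `p` all of whose partial derivatives of the image under the heat
operator, of order `|α| ≤ p − 2`, vanish at the point `z`. -/
def QTset (d : ℕ) (κ : ℝ) (z : Fin (d + 1) → ℝ) (p : ℕ) :
    Set (MvPolynomial (Fin (d + 1)) ℝ) :=
  {v | v.totalDegree ≤ p ∧
    ∀ α : Fin (d + 1) → ℕ, (∑ i, α i) + 2 ≤ p →
      MvPolynomial.eval z (mpderiv α (heatOp d κ v)) = 0}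

open MvPolynomial

namespace QTAux

variable {n : ℕ}

noncomputable def pd (i : Fin n) : MvPolynomial (Fin n) ℝ →ₗ[ℝ] MvPolynomial (Fin n) ℝ :=
  ((MvPolynomial.pderiv i :
      Derivation ℝ (MvPolynomial (Fin n) ℝ) (MvPolynomial (Fin n) ℝ)).toLinearMap)

lemma pd_apply (i : Fin n) (q : MvPolynomial (Fin n) ℝ) : pd i q = pderiv i q := rfl

lemma pd_pow_monomial (i : Fin n) (k : ℕ) (σ : Fin n →₀ ℕ) (c : ℝ) :
    (pd i ^ k) (monomial σ c) =
      monomial (σ - Finsupp.single i k) (c * (σ i).descFactorial k) := by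
  induction k with
  | zero => simp
  | succ k ih =>
    rw [pow_succ', Module.End.mul_apply, ih, pd_apply, pderiv_monomial]
    have h1 : σ - Finsupp.single i k - Finsupp.single i 1 = σ - Finsupp.single i (k + 1) := by
      rw [tsub_tsub, ← Finsupp.single_add]
    have h2 : (σ - Finsupp.single i k) i = σ i - k := by
      simp [Finsupp.tsub_apply]
    rw [h1, h2, Nat.descFactorial_succ, Nat.cast_mul]
    ring_nf

lemma single_sum_apply_of_not_mem (α : Fin n → ℕ) (l : List (Fin n)) (i : Fin n) (h : i ∉ l) :
    ((l.map fun j => Finsupp.single j (α j)).sum) i = 0 := by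
  induction l with
  | nil => simp
  | cons j l ih =>
    simp only [List.map_cons, List.sum_cons, Finsupp.add_apply]
    rw [Finsupp.single_apply, if_neg, ih (fun hh => h (List.mem_cons_of_mem _ hh))]
    intro hij; exact h (hij ▸ (List.mem_cons_self : j ∈ j :: l))

lemma prod_pd_monomial (α : Fin n → ℕ) (l : List (Fin n)) (hl : l.Nodup) (σ : Fin n →₀ ℕ) (c : ℝ) :
    ((l.map fun i => pd i ^ α i).prod) (monomial σ c) =
      monomial (σ - (l.map fun i => Finsupp.single i (α i)).sum)
        (c * (l.map fun i => ((σ i).descFactorial (α i) : ℝ)).prod) := by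
  induction l with
  | nil => simp
  | cons i l ih =>
    have hnotmem : i ∉ l := (List.nodup_cons.mp hl).1
    rw [List.map_cons, List.prod_cons, Module.End.mul_apply,
      ih (List.nodup_cons.mp hl).2, pd_pow_monomial]
    have h2 : (σ - (l.map fun j => Finsupp.single j (α j)).sum) i = σ i := by
      simp [Finsupp.tsub_apply, single_sum_apply_of_not_mem α l i hnotmem]
    rw [h2, List.map_cons, List.sum_cons, List.map_cons, List.prod_cons]
    rw [tsub_tsub, add_comm ((l.map fun i => Finsupp.single i (α i)).sum)]
    ring_nf

lemma mpderiv_monomial (α : Fin n → ℕ) (σ : Fin n →₀ ℕ) (c : ℝ) :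
    mpderiv α (monomial σ c) =
      monomial (σ - Finsupp.equivFunOnFinite.symm α)
        (c * ∏ i, ((σ i).descFactorial (α i) : ℝ)) := by
  have h0 : mpderiv α = ((List.finRange n).map fun i => pd i ^ α i).prod := rfl
  rw [h0, prod_pd_monomial α _ (List.nodup_finRange n)]
  rw [← Fin.prod_univ_def]
  congr 2
  ext j
  rw [← Fin.sum_univ_def (fun i => Finsupp.single i (α i))]
  simp [Finsupp.tsub_apply, Finsupp.finset_sum_apply, Finsupp.single_apply]

noncomputable def sh (z : Fin n → ℝ) : MvPolynomial (Fin n) ℝ →ₐ[ℝ] MvPolynomial (Fin n) ℝ :=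
  aeval (fun i => X i + C (z i))

lemma sh_X (z : Fin n → ℝ) (i : Fin n) : sh z (X i) = X i + C (z i) := by simp [sh]

lemma sh_sh (z : Fin n → ℝ) (q : MvPolynomial (Fin n) ℝ) : sh z (sh (-z) q) = q := by
  have h : (sh z).comp (sh (-z)) = AlgHom.id ℝ _ := by
    apply MvPolynomial.algHom_ext
    intro i
    simp [sh]
  calc sh z (sh (-z) q) = ((sh z).comp (sh (-z))) q := rfl
  _ = q := by rw [h]; rfl

lemma pderiv_sh (z : Fin n → ℝ) (i : Fin n) (q : MvPolynomial (Fin n) ℝ) :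
    pderiv i (sh z q) = sh z (pderiv i q) := by
  induction q using MvPolynomial.induction_on with
  | C a => simp [sh, pderiv_C]
  | add f g hf hg => simp [map_add, hf, hg]
  | mul_X f j hf =>
    rw [map_mul, pderiv_mul, hf, sh_X, pderiv_mul]
    simp only [map_add, map_mul, sh_X, pderiv_C]
    by_cases hij : j = i
    · subst hij; simp [pderiv_X_self]
    · simp [pderiv_X_of_ne hij]

lemma eval_eq_constantCoeff_sh (z : Fin n → ℝ) (q : MvPolynomial (Fin n) ℝ) :
    eval z q = constantCoeff (sh z q) := by
  have h : (constantCoeff (R := ℝ) (σ := Fin n)).comp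
      ((sh z) : MvPolynomial (Fin n) ℝ →+* MvPolynomial (Fin n) ℝ) = eval z := by
    apply MvPolynomial.ringHom_ext
    · intro a; simp [sh]
    · intro i; simp [sh]
  rw [← h]; rfl

lemma totalDegree_sh_le (z : Fin n → ℝ) (q : MvPolynomial (Fin n) ℝ) :
    (sh z q).totalDegree ≤ q.totalDegree := by
  conv_lhs => rw [q.as_sum, map_sum]
  refine le_trans (totalDegree_finset_sum _ _) ?_
  apply Finset.sup_le
  intro σ hσ
  refine le_trans ?_ (le_totalDegree hσ)
  rw [sh, aeval_monomial]
  refine le_trans (totalDegree_mul _ _) ?_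
  have h1 : (algebraMap ℝ (MvPolynomial (Fin n) ℝ) (coeff σ q)).totalDegree = 0 := totalDegree_C _
  rw [h1, zero_add, Finsupp.prod]
  refine le_trans (totalDegree_finset_prod _ _) ?_
  rw [Finsupp.sum]
  apply Finset.sum_le_sum
  intro i _
  refine le_trans (totalDegree_pow _ _) ?_
  have h2 : (X i + C (z i) : MvPolynomial (Fin n) ℝ).totalDegree ≤ 1 := by
    refine le_trans (totalDegree_add _ _) ?_
    simp [totalDegree_X, totalDegree_C]
  calc σ i * (X i + C (z i) : MvPolynomial (Fin n) ℝ).totalDegree ≤ σ i * 1 :=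
        Nat.mul_le_mul_left _ h2
  _ = σ i := mul_one _

lemma constantCoeff_mpderiv (α : Fin n → ℕ) (q : MvPolynomial (Fin n) ℝ) :
    constantCoeff (mpderiv α q) =
      (∏ i, ((α i).factorial : ℝ)) * coeff (Finsupp.equivFunOnFinite.symm α) q := by
  induction q using MvPolynomial.induction_on' with
  | add f g hf hg => rw [map_add, map_add, coeff_add, hf, hg, mul_add]
  | monomial σ c =>
    rw [mpderiv_monomial, constantCoeff_monomial, coeff_monomial]
    set A := Finsupp.equivFunOnFinite.symm α with hA
    have hcoe : ∀ i, A i = α i := fun i => rfl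
    by_cases hσ : σ = A
    · subst hσ
      rw [if_pos (tsub_self A), if_pos rfl]
      have : ∀ i, ((A i).descFactorial (α i) : ℝ) = ((α i).factorial : ℝ) := by
        intro i; rw [hcoe i, Nat.descFactorial_self]
      simp_rw [this]
      ring
    · have hAσ : ¬ (A = σ) := fun h => hσ h.symm
      rw [if_neg hσ, mul_zero]
      by_cases h0 : σ - A = 0
      · rw [if_pos h0]
        have hle : σ ≤ A := tsub_eq_zero_iff_le.mp h0
        have : ∃ i, σ i < α i := by
          by_contra hc
          push_neg at hc
          apply hσ
          ext i
          exact le_antisymm ((Finsupp.le_def.mp hle) i) ((hcoe i) ▸ hc i)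
        obtain ⟨i, hi⟩ := this
        have : ((σ i).descFactorial (α i) : ℝ) = 0 := by
          rw [Nat.descFactorial_eq_zero_iff_lt.mpr hi]; simp
        rw [Finset.prod_eq_zero (Finset.mem_univ i) this, mul_zero]
      · rw [if_neg h0]

lemma pd_pow_sh (z : Fin n → ℝ) (i : Fin n) (k : ℕ) (q : MvPolynomial (Fin n) ℝ) :
    sh z ((pd i ^ k) q) = (pd i ^ k) (sh z q) := by
  induction k generalizing q with
  | zero => simp
  | succ k ih => rw [pow_succ, Module.End.mul_apply, Module.End.mul_apply, ih, pd_apply, pd_apply,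
      ← pderiv_sh]

lemma sh_list_prod (z : Fin n → ℝ) (α : Fin n → ℕ) (l : List (Fin n))
    (q : MvPolynomial (Fin n) ℝ) :
    sh z (((l.map fun i => pd i ^ α i).prod) q) = ((l.map fun i => pd i ^ α i).prod) (sh z q) := by
  induction l generalizing q with
  | nil => simp
  | cons i l ih =>
    rw [List.map_cons, List.prod_cons, Module.End.mul_apply, Module.End.mul_apply,
      pd_pow_sh, ih]

lemma sh_mpderiv (z : Fin n → ℝ) (α : Fin n → ℕ) (q : MvPolynomial (Fin n) ℝ) :
    sh z (mpderiv α q) = mpderiv α (sh z q) :=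
  sh_list_prod z α (List.finRange n) q

lemma eval_mpderiv (z : Fin n → ℝ) (α : Fin n → ℕ) (q : MvPolynomial (Fin n) ℝ) :
    eval z (mpderiv α q) =
      (∏ i, ((α i).factorial : ℝ)) * coeff (Finsupp.equivFunOnFinite.symm α) (sh z q) := by
  rw [eval_eq_constantCoeff_sh, sh_mpderiv, constantCoeff_mpderiv]

lemma coeff_pderiv (i : Fin n) (σ : Fin n →₀ ℕ) (q : MvPolynomial (Fin n) ℝ) :
    coeff σ (pderiv i q) = ((σ i : ℝ) + 1) * coeff (σ + Finsupp.single i 1) q := by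
  induction q using MvPolynomial.induction_on' with
  | add f g hf hg => rw [map_add, coeff_add, coeff_add, hf, hg, mul_add]
  | monomial τ c =>
    rw [pderiv_monomial, coeff_monomial, coeff_monomial]
    by_cases h : τ = σ + Finsupp.single i 1
    · subst h
      rw [if_pos, if_pos rfl]
      · have h3 : (σ + Finsupp.single i 1 : Fin n →₀ ℕ) i = σ i + 1 := by simp
        rw [h3]
        push_cast
        ring
      · rw [add_tsub_cancel_right]
    · rw [if_neg h, mul_zero]
      by_cases h2 : τ - Finsupp.single i 1 = σ
      · rw [if_pos h2]
        have hτ : τ i = 0 := by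
          by_contra hne
          apply h
          rw [← h2, tsub_add_cancel_of_le]
          rw [Finsupp.single_le_iff]
          omega
        rw [hτ]; simp
      · rw [if_neg h2]

lemma apply_le_sum {m : ℕ} (τ : Fin m →₀ ℕ) (i : Fin m) : τ i ≤ τ.sum (fun _ e => e) := by
  by_cases h : τ i = 0
  · omega
  · exact Finset.single_le_sum (fun _ _ => Nat.zero_le _) (Finsupp.mem_support_iff.mpr h)

noncomputable def Acoef (d : ℕ) (κ : ℝ) (p : ℕ) (c : (Fin (d + 1) →₀ ℕ) → ℝ)
    (σ : Fin (d + 1) →₀ ℕ) : ℝ :=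
  if h : σ (Fin.last d) = 0 ∨ p < σ.sum (fun _ e => e) then 0
  else ((σ (Fin.last d) : ℝ))⁻¹ *
    (c (σ - Finsupp.single (Fin.last d) 1) +
     κ * ∑ j : Fin d, ((σ (Fin.castSucc j) : ℝ) + 1) * ((σ (Fin.castSucc j) : ℝ) + 2) *
       Acoef d κ p c (σ - Finsupp.single (Fin.last d) 1 + Finsupp.single (Fin.castSucc j) 2))
  termination_by σ (Fin.last d)
  decreasing_by
    push_neg at h
    simp only [Finsupp.add_apply, Finsupp.tsub_apply, Finsupp.single_apply]
    rw [if_pos trivial, if_neg (Fin.ne_of_lt (Fin.castSucc_lt_last j)), add_zero]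
    omega

lemma Acoef_eq (d : ℕ) (κ : ℝ) (p : ℕ) (c : (Fin (d + 1) →₀ ℕ) → ℝ) (σ : Fin (d + 1) →₀ ℕ) :
    Acoef d κ p c σ =
      if σ (Fin.last d) = 0 ∨ p < σ.sum (fun _ e => e) then 0
      else ((σ (Fin.last d) : ℝ))⁻¹ *
        (c (σ - Finsupp.single (Fin.last d) 1) +
         κ * ∑ j : Fin d, ((σ (Fin.castSucc j) : ℝ) + 1) * ((σ (Fin.castSucc j) : ℝ) + 2) *
           Acoef d κ p c (σ - Finsupp.single (Fin.last d) 1 + Finsupp.single (Fin.castSucc j) 2)) := by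
  conv_lhs => unfold Acoef
  rw [dite_eq_ite]

lemma Acoef_of_gt {d : ℕ} {κ : ℝ} {p : ℕ} {c : (Fin (d + 1) →₀ ℕ) → ℝ} {σ : Fin (d + 1) →₀ ℕ}
    (h : p < σ.sum (fun _ e => e)) : Acoef d κ p c σ = 0 := by
  rw [Acoef_eq, if_pos (Or.inr h)]

noncomputable def wpoly (d : ℕ) (κ : ℝ) (p : ℕ) (c : (Fin (d + 1) →₀ ℕ) → ℝ) :
    MvPolynomial (Fin (d + 1)) ℝ :=
  ∑ τ ∈ Finset.Iic (Finsupp.equivFunOnFinite.symm fun _ : Fin (d + 1) => p),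
    monomial τ (Acoef d κ p c τ)

lemma coeff_wpoly (d : ℕ) (κ : ℝ) (p : ℕ) (c : (Fin (d + 1) →₀ ℕ) → ℝ) (τ : Fin (d + 1) →₀ ℕ) :
    coeff τ (wpoly d κ p c) = Acoef d κ p c τ := by
  rw [wpoly]
  rw [coeff_sum]
  simp_rw [coeff_monomial]
  rw [Finset.sum_ite_eq' _ τ (fun τ' => Acoef d κ p c τ')]
  split
  · rfl
  · rename_i hmem
    rw [Finset.mem_Iic] at hmem
    have : ∃ i, p < τ i := by
      by_contra hc
      push_neg at hc
      exact hmem (Finsupp.le_def.mpr (fun i => by simpa using hc i))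
    obtain ⟨i, hi⟩ := this
    exact (Acoef_of_gt (lt_of_lt_of_le hi (apply_le_sum τ i))).symm

lemma totalDegree_wpoly (d : ℕ) (κ : ℝ) (p : ℕ) (c : (Fin (d + 1) →₀ ℕ) → ℝ) :
    (wpoly d κ p c).totalDegree ≤ p := by
  apply Finset.sup_le
  intro τ hτ
  rw [mem_support_iff, coeff_wpoly] at hτ
  by_contra hgt
  exact hτ (Acoef_of_gt (by omega))

lemma coeff_heat_wpoly (d : ℕ) (κ : ℝ) (p : ℕ) (c : (Fin (d + 1) →₀ ℕ) → ℝ)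
    (σ : Fin (d + 1) →₀ ℕ) (hσ : (σ.sum fun _ e => e) + 2 ≤ p) :
    coeff σ (heatOp d κ (wpoly d κ p c)) = c σ := by
  set t := Fin.last d
  set w := wpoly d κ p c
  have hcw : ∀ τ, coeff τ w = Acoef d κ p c τ := coeff_wpoly d κ p c
  have key : ∀ j : Fin d,
      coeff σ (pderiv j.castSucc (pderiv j.castSucc w)) =
        ((σ j.castSucc : ℝ) + 1) * ((σ j.castSucc : ℝ) + 2) *
          Acoef d κ p c (σ + Finsupp.single j.castSucc 2) := by
    intro j
    rw [coeff_pderiv, coeff_pderiv, hcw]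
    have h1 : (σ + Finsupp.single j.castSucc 1 : Fin (d+1) →₀ ℕ) j.castSucc = σ j.castSucc + 1 := by
      simp
    have h2 : σ + Finsupp.single j.castSucc 1 + Finsupp.single j.castSucc 1
        = σ + Finsupp.single j.castSucc 2 := by
      rw [add_assoc, ← Finsupp.single_add]
    rw [h1, h2]
    push_cast
    ring
  have hlast : coeff σ (pderiv t w) = ((σ t : ℝ) + 1) * Acoef d κ p c (σ + Finsupp.single t 1) :=
    by rw [coeff_pderiv, hcw]
  have hsum1 : ((σ + Finsupp.single t 1 : Fin (d+1) →₀ ℕ).sum fun _ e => e)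
      = (σ.sum fun _ e => e) + 1 := by
    rw [Finsupp.sum_add_index' (fun _ => rfl) (fun _ _ _ => rfl), Finsupp.sum_single_index rfl]
  have hA : Acoef d κ p c (σ + Finsupp.single t 1) =
      ((σ t : ℝ) + 1)⁻¹ * (c σ + κ * ∑ j : Fin d,
        ((σ j.castSucc : ℝ) + 1) * ((σ j.castSucc : ℝ) + 2) *
          Acoef d κ p c (σ + Finsupp.single j.castSucc 2)) := by
    rw [Acoef_eq]
    rw [if_neg]
    · congr 1
      · congr 1
        simp [t]
      · congr 1
        rw [add_tsub_cancel_right]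
        congr 1
        apply Finset.sum_congr rfl
        intro j _
        have hne : (Fin.castSucc j : Fin (d+1)) ≠ t := Fin.ne_of_lt (Fin.castSucc_lt_last j)
        have h3 : (σ + Finsupp.single t 1 : Fin (d+1) →₀ ℕ) j.castSucc = σ j.castSucc := by
          rw [Finsupp.add_apply, Finsupp.single_apply, if_neg (fun h => hne h.symm), add_zero]
        rw [h3, add_tsub_cancel_right]
    · push_neg
      constructor
      · simp [t]
      · rw [hsum1]; omega
  rw [heatOp, coeff_sub, coeff_C_mul, coeff_sum, hlast, hA]
  simp_rw [key]
  have hne0 : ((σ t : ℝ) + 1) ≠ 0 := by positivity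
  field_simp
  ring

lemma finite_pred {N : ℕ} (P : (Fin n →₀ ℕ) → Prop)
    (hP : ∀ σ, P σ → (σ.sum fun _ e => e) ≤ N) : Finite {σ : Fin n →₀ ℕ // P σ} := by
  have hinj : Function.Injective
      (fun σ : {σ : Fin n →₀ ℕ // P σ} => (fun i => (⟨σ.1 i, by
        have := hP σ.1 σ.2
        have := apply_le_sum σ.1 i
        omega⟩ : Fin (N+1))) : _ → (Fin n → Fin (N+1))) := by
    intro σ τ h
    ext i
    exact congrArg Fin.val (congrFun h i)
  exact Finite.of_injective _ hinj

lemma card_sum_eq (n k : ℕ) :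
    Nat.card {σ : Fin n →₀ ℕ // (σ.sum fun _ e => e) = k} = (n + k - 1).choose k := by
  have e1 : {σ : Fin n →₀ ℕ // (σ.sum fun _ e => e) = k} ≃ Sym (Fin n) k :=
    { toFun := fun σ => ⟨Finsupp.toMultiset σ.1, by
        rw [Finsupp.card_toMultiset]; exact σ.2⟩
      invFun := fun m => ⟨Multiset.toFinsupp m.1, by
        have : Finsupp.toMultiset (Multiset.toFinsupp m.1) = m.1 := by simp
        have h2 := Finsupp.card_toMultiset (Multiset.toFinsupp m.1)
        rw [this] at h2
        exact h2.symm.trans m.2⟩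
      left_inv := fun σ => by ext : 1; simp
      right_inv := fun m => by
        apply Subtype.ext
        show (Finsupp.toMultiset (Multiset.toFinsupp m.1) : Multiset (Fin n)) = m.1
        simp }
  rw [Nat.card_congr e1, Nat.card_eq_fintype_card, Sym.card_sym_eq_choose, Fintype.card_fin]

lemma card_sum_le (n : ℕ) (p : ℕ) :
    Nat.card {σ : Fin n →₀ ℕ // (σ.sum fun _ e => e) ≤ p} = (p + n).choose n := by
  induction p with
  | zero =>
    have e : {σ : Fin n →₀ ℕ // (σ.sum fun _ e => e) ≤ 0} ≃
        {σ : Fin n →₀ ℕ // (σ.sum fun _ e => e) = 0} :=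
      Equiv.subtypeEquivRight (fun σ => by omega)
    rw [Nat.card_congr e, card_sum_eq, Nat.choose_zero_right, Nat.zero_add, Nat.choose_self]
  | succ p ih =>
    haveI : Finite {σ : Fin n →₀ ℕ // (σ.sum fun _ e => e) ≤ p} :=
      finite_pred _ (fun σ h => h)
    haveI : Finite {σ : Fin n →₀ ℕ // (σ.sum fun _ e => e) = p + 1} :=
      finite_pred _ (fun σ h => le_of_eq h)
    have e : {σ : Fin n →₀ ℕ // (σ.sum fun _ e => e) ≤ p + 1} ≃
        {σ : Fin n →₀ ℕ // (σ.sum fun _ e => e) ≤ p} ⊕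
        {σ : Fin n →₀ ℕ // (σ.sum fun _ e => e) = p + 1} :=
      { toFun := fun σ => if h : (σ.1.sum fun _ e => e) ≤ p then Sum.inl ⟨σ.1, h⟩
          else Sum.inr ⟨σ.1, by have := σ.2; omega⟩
        invFun := Sum.elim (fun σ => ⟨σ.1, by have := σ.2; omega⟩) (fun σ => ⟨σ.1, by
          have := σ.2; omega⟩)
        left_inv := fun σ => by
          by_cases h : (σ.1.sum fun _ e => e) ≤ p
          · simp [h]
          · simp [h]
        right_inv := fun s => by
          rcases s with σ | σ
          · simp [σ.2]
          · have h : ¬ (σ.1.sum fun _ e => e) ≤ p := by have := σ.2; omega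
            simp [h] }
    rw [Nat.card_congr e, Nat.card_sum, ih, card_sum_eq]
    have h1 : n + (p + 1) - 1 = n + p := by omega
    rw [h1]
    have h2 : (p + n).choose n = (n + p).choose p := by
      rw [Nat.add_comm p n]; exact Nat.choose_symm_add
    have h3 : (p + 1 + n).choose n = (n + p + 1).choose (p + 1) := by
      rw [show p + 1 + n = n + (p + 1) by omega, show n + p + 1 = n + (p + 1) by omega]
      exact Nat.choose_symm_add
    rw [h2, h3, Nat.choose_succ_succ' (n + p) p]

end QTAux

open QTAux in
/-- The heat operator commutes with the translation `sh z`. -/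
lemma sh_heatOp (d : ℕ) (κ : ℝ) (z : Fin (d + 1) → ℝ) (v : MvPolynomial (Fin (d + 1)) ℝ) :
    sh z (heatOp d κ v) = heatOp d κ (sh z v) := by
  rw [heatOp, heatOp, map_sub, map_mul, map_sum]
  congr 1
  · rw [pderiv_sh]
  · congr 1
    · show sh z (algebraMap ℝ _ κ) = _
      rw [AlgHom.commutes]
      rfl
    · apply Finset.sum_congr rfl
      intro j _
      rw [pderiv_sh, pderiv_sh]

open QTAux in
/-- The heat operator as a linear map. -/
noncomputable def heatL (d : ℕ) (κ : ℝ) :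
    MvPolynomial (Fin (d + 1)) ℝ →ₗ[ℝ] MvPolynomial (Fin (d + 1)) ℝ :=
  pd (Fin.last d) - κ • (∑ j : Fin d, (pd j.castSucc) ∘ₗ (pd j.castSucc))

open QTAux in
lemma heatL_apply (d : ℕ) (κ : ℝ) (v : MvPolynomial (Fin (d + 1)) ℝ) :
    heatL d κ v = heatOp d κ v := by
  rw [heatL, heatOp, MvPolynomial.C_mul']
  simp [LinearMap.sub_apply, LinearMap.smul_apply, LinearMap.sum_apply, LinearMap.comp_apply,
    pd_apply, Finsupp.smul_sum]

/-- Dimension of the quasi-Trefftz space (eq. (5.2) of the paper): for every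
`d ≥ 1`, `κ > 0`, `z ∈ ℝ^{d+1}` and integer `p ≥ 1`, the set `QT^p(z)` is a
linear subspace of the space of real polynomials in `d+1` variables, of
dimension `binom(p+d, d) + binom(p−1+d, d)`. -/
theorem stmt11 (d : ℕ) (hd : 1 ≤ d) (κ : ℝ) (hκ : 0 < κ)
    (z : Fin (d + 1) → ℝ) (p : ℕ) (hp : 1 ≤ p) :
    ∃ S : Submodule ℝ (MvPolynomial (Fin (d + 1)) ℝ),
      (S : Set (MvPolynomial (Fin (d + 1)) ℝ)) = QTset d κ z p ∧
      Module.finrank ℝ S = (p + d).choose d + (p - 1 + d).choose d := by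
  classical
  set W : Submodule ℝ (MvPolynomial (Fin (d + 1)) ℝ) := restrictTotalDegree (Fin (d + 1)) ℝ p
    with hW
  haveI : Finite {σ : Fin (d + 1) →₀ ℕ // (σ.sum fun _ e => e) + 2 ≤ p} :=
    QTAux.finite_pred (N := p) _ (fun σ h => by omega)
  haveI : Fintype {σ : Fin (d + 1) →₀ ℕ // (σ.sum fun _ e => e) + 2 ≤ p} := Fintype.ofFinite _
  set L : W →ₗ[ℝ] ({σ : Fin (d + 1) →₀ ℕ // (σ.sum fun _ e => e) + 2 ≤ p} → ℝ) :=
    LinearMap.pi (fun σ =>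
      (aeval z).toLinearMap ∘ₗ mpderiv (fun i => σ.1 i) ∘ₗ heatL d κ ∘ₗ W.subtype) with hL
  have hLapp : ∀ (v : W) (σ : {σ : Fin (d + 1) →₀ ℕ // (σ.sum fun _ e => e) + 2 ≤ p}),
      L v σ = eval z (mpderiv (fun i => σ.1 i) (heatOp d κ v.1)) := by
    intro v σ
    show aeval z (mpderiv (fun i => σ.1 i) (heatL d κ v.1)) = _
    rw [heatL_apply]
    rfl
  refine ⟨Submodule.map W.subtype (LinearMap.ker L), ?_, ?_⟩
  · -- set equality
    ext v
    simp only [SetLike.mem_coe, Submodule.mem_map, LinearMap.mem_ker]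
    constructor
    · rintro ⟨u, hu, rfl⟩
      constructor
      · exact (mem_restrictTotalDegree _ _ _).mp u.2
      · intro α hα
        have hσ : ((Finsupp.equivFunOnFinite.symm α).sum fun _ e => e) + 2 ≤ p := by
          have h4 : ((Finsupp.equivFunOnFinite.symm α).sum fun _ e => e) = ∑ i, α i := by
            rw [Finsupp.sum_fintype _ _ (fun i => rfl)]
            rfl
          omega
        have h5 := congrFun hu ⟨Finsupp.equivFunOnFinite.symm α, hσ⟩
        rw [hLapp] at h5
        simpa using h5
    · rintro ⟨hdeg, hcond⟩
      refine ⟨⟨v, (mem_restrictTotalDegree _ _ _).mpr hdeg⟩, ?_, rfl⟩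
      funext σ
      rw [hLapp]
      have hsum : (∑ i, σ.1 i) + 2 ≤ p := by
        have h4 : (σ.1.sum fun _ e => e) = ∑ i, σ.1 i := by
          rw [Finsupp.sum_fintype _ _ (fun i => rfl)]
        have h2 := σ.2
        omega
      have h6 := hcond (fun i => σ.1 i) hsum
      simpa using h6
  · -- dimension computation
    have hinj : Function.Injective W.subtype := Submodule.injective_subtype W
    have e1 : (LinearMap.ker L) ≃ₗ[ℝ] Submodule.map W.subtype (LinearMap.ker L) :=
      Submodule.equivMapOfInjective W.subtype hinj (LinearMap.ker L)
    have e1fr : Module.finrank ℝ (Submodule.map W.subtype (LinearMap.ker L)) =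
        Module.finrank ℝ (LinearMap.ker L) := (LinearEquiv.finrank_eq e1).symm
    rw [e1fr]
    -- surjectivity of L
    have hsurj : Function.Surjective L := by
      intro c
      set cf : (Fin (d + 1) →₀ ℕ) → ℝ := fun σ =>
        if h : (σ.sum fun _ e => e) + 2 ≤ p then
          c ⟨σ, h⟩ * (∏ i, ((σ i).factorial : ℝ))⁻¹ else 0 with hcf
      set w := QTAux.wpoly d κ p cf with hw
      set v := QTAux.sh (-z) w with hv
      have hdegv : v.totalDegree ≤ p :=
        le_trans (QTAux.totalDegree_sh_le _ _) (QTAux.totalDegree_wpoly d κ p cf)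
      refine ⟨⟨v, (mem_restrictTotalDegree _ _ _).mpr hdegv⟩, ?_⟩
      funext σ
      rw [hLapp]
      have hshv : QTAux.sh z v = w := QTAux.sh_sh z w
      have heq : eval z (mpderiv (fun i => σ.1 i) (heatOp d κ v)) =
          (∏ i, ((σ.1 i).factorial : ℝ)) *
            coeff (Finsupp.equivFunOnFinite.symm (fun i => σ.1 i)) (QTAux.sh z (heatOp d κ v)) :=
        QTAux.eval_mpderiv z _ _
      rw [heq, sh_heatOp, hshv]
      have hsymm : Finsupp.equivFunOnFinite.symm (fun i => σ.1 i) = σ.1 := by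
        ext i; rfl
      rw [hsymm]
      rw [QTAux.coeff_heat_wpoly d κ p cf σ.1 σ.2]
      have hcfσ : cf σ.1 = c σ * (∏ i, ((σ.1 i).factorial : ℝ))⁻¹ := by
        simp only [hcf]
        rw [dif_pos σ.2]
      rw [hcfσ]
      have hfacne : (∏ i, ((σ.1 i).factorial : ℝ)) ≠ 0 := by
        apply ne_of_gt
        apply Finset.prod_pos
        intro i _
        exact_mod_cast Nat.factorial_pos _
      field_simp
    -- rank-nullity
    haveI : Module.Finite ℝ W := by
      rw [hW]; infer_instance
    have hrn := LinearMap.finrank_range_add_finrank_ker L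
    have hrange : LinearMap.range L = ⊤ := LinearMap.range_eq_top.mpr hsurj
    rw [hrange] at hrn
    have htop : Module.finrank ℝ
        (⊤ : Submodule ℝ ({σ : Fin (d + 1) →₀ ℕ // (σ.sum fun _ e => e) + 2 ≤ p} → ℝ)) =
        Nat.card {σ : Fin (d + 1) →₀ ℕ // (σ.sum fun _ e => e) + 2 ≤ p} := by
      rw [finrank_top, Module.finrank_pi, Nat.card_eq_fintype_card]
    rw [htop] at hrn
    -- finrank W
    have hWfin : Module.finrank ℝ W = (p + (d + 1)).choose (d + 1) := by
      haveI : Finite {σ : Fin (d + 1) →₀ ℕ // (σ.sum fun _ e => e) ≤ p} :=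
        QTAux.finite_pred _ (fun σ h => h)
      haveI ftF : Finite ↥{σ : Fin (d + 1) →₀ ℕ | (σ.sum fun _ e => e) ≤ p} :=
        QTAux.finite_pred _ (fun σ h => h)
      haveI ft : Fintype ↥{σ : Fin (d + 1) →₀ ℕ | (σ.sum fun _ e => e) ≤ p} := Fintype.ofFinite _
      have hb := Module.finrank_eq_card_basis
        (basisRestrictSupport ℝ {σ : Fin (d + 1) →₀ ℕ | (σ.sum fun _ e => e) ≤ p})
      rw [hW]
      rw [show restrictTotalDegree (Fin (d + 1)) ℝ p =
        restrictSupport ℝ {σ : Fin (d + 1) →₀ ℕ | (σ.sum fun _ e => e) ≤ p} from rfl]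
      rw [hb, ← Nat.card_eq_fintype_card]
      exact QTAux.card_sum_le (d + 1) p
    rw [hWfin] at hrn
    -- card of the index type
    rcases Nat.exists_eq_add_of_le hp with ⟨p', rfl⟩
    rcases p' with _ | q
    · -- p = 1
      haveI : IsEmpty {σ : Fin (d + 1) →₀ ℕ // (σ.sum fun _ e => e) + 2 ≤ 1 + 0} := by
        constructor
        intro σ
        have := σ.2
        omega
      have hcard : Nat.card {σ : Fin (d + 1) →₀ ℕ // (σ.sum fun _ e => e) + 2 ≤ 1 + 0} = 0 := by
        simp
      rw [hcard] at hrn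
      have h1 : (1 + 0 + (d + 1)).choose (d + 1) = d + 2 := by
        rw [show 1 + 0 + (d + 1) = (d + 1) + 1 by omega, Nat.choose_succ_self_right]
      have h2 : (1 + 0 + d).choose d = d + 1 := by
        rw [show 1 + 0 + d = d + 1 by omega, Nat.choose_succ_self_right]
      have h3 : (1 + 0 - 1 + d).choose d = 1 := by
        simp
      omega
    · -- p = q + 2
      have hcardI : Nat.card {σ : Fin (d + 1) →₀ ℕ // (σ.sum fun _ e => e) + 2 ≤ 1 + (q + 1)} =
          (q + (d + 1)).choose (d + 1) := by
        have e2 : {σ : Fin (d + 1) →₀ ℕ // (σ.sum fun _ e => e) + 2 ≤ 1 + (q + 1)} ≃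
            {σ : Fin (d + 1) →₀ ℕ // (σ.sum fun _ e => e) ≤ q} :=
          Equiv.subtypeEquivRight (fun σ => by omega)
        rw [Nat.card_congr e2, QTAux.card_sum_le (d + 1) q]
      rw [hcardI] at hrn
      have hP1 : (q + d + 3).choose (d + 1) = (q + d + 2).choose d + (q + d + 2).choose (d + 1) :=
        Nat.choose_succ_succ' (q + d + 2) d
      have hP2 : (q + d + 2).choose (d + 1) = (q + d + 1).choose d + (q + d + 1).choose (d + 1) :=
        Nat.choose_succ_succ' (q + d + 1) d
      have hi1 : (1 + (q + 1) + (d + 1)).choose (d + 1) = (q + d + 3).choose (d + 1) := by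
        rw [show 1 + (q + 1) + (d + 1) = q + d + 3 by omega]
      have hi2 : (q + (d + 1)).choose (d + 1) = (q + d + 1).choose (d + 1) := by
        rw [show q + (d + 1) = q + d + 1 by omega]
      have hi3 : (1 + (q + 1) + d).choose d = (q + d + 2).choose d := by
        rw [show 1 + (q + 1) + d = q + d + 2 by omega]
      have hi4 : (1 + (q + 1) - 1 + d).choose d = (q + d + 1).choose d := by
        rw [show 1 + (q + 1) - 1 + d = q + d + 1 by omega]
      rw [hi1, hi2] at hrn
      rw [hi3, hi4]
      omega
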